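/- Each coordinate function of the map X : ℝ² → ℝ³ defined (for a fixed real parameter a > 0) by X(u,v) = ( [a·cos u·sin(a v)·cosh(a u)·cosh v − a·sin u·cos(a v)·sinh(a u)·sinh v + cos u·cos(a v)·cosh(a u)·sinh v + sin u·sin(a v)·sinh(a u)·cosh v]/(a²+1) + cos u·cosh v , [a·cos u·cos(a v)·sinh(a u)·sinh v + a·sin u·sin(a v)·cosh(a u)·cosh v + sin u·cos(a v)·cosh(a u)·sinh v − cos u·sin(a v)·sinh(a u)·cosh v]/(a²+1) + sin u·cosh v , −sin(a v)·sinh(a u)/a ) is harmonic on ℝ², i.e. ∂²X_k/∂u² + ∂²X_k/∂v² = 0 for k = 1,2,3. -/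

import Mathlib

open Real

/-- First coordinate of the bending helicoid with timelike axis. -/
noncomputable def X1 (a u v : ℝ) : ℝ :=
  (a * cos u * sin (a*v) * cosh (a*u) * cosh v
   - a * sin u * cos (a*v) * sinh (a*u) * sinh v
   + cos u * cos (a*v) * cosh (a*u) * sinh v
   + sin u * sin (a*v) * sinh (a*u) * cosh v) / (a^2 + 1)
  + cos u * cosh v

/-- Second coordinate of the bending helicoid with timelike axis. -/
noncomputable def X2 (a u v : ℝ) : ℝ :=
  (a * cos u * cos (a*v) * sinh (a*u) * sinh v
   + a * sin u * sin (a*v) * cosh (a*u) * cosh v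
   + sin u * cos (a*v) * cosh (a*u) * sinh v
   - cos u * sin (a*v) * sinh (a*u) * cosh v) / (a^2 + 1)
  + sin u * cosh v

/-- Third coordinate of the bending helicoid with timelike axis. -/
noncomputable def X3 (a u v : ℝ) : ℝ :=
  - (sin (a*v) * sinh (a*u)) / a

section Aux

variable (a u v x : ℝ)

lemma hX1u : HasDerivAt (fun s => X1 a s v)
    (-(cos (a*v) * sinh v) * (sin x * cosh (a*x)) + (sin (a*v) * cosh v) * (cos x * sinh (a*x))
      - cosh v * sin x) x := by
  have hch : HasDerivAt (fun s : ℝ => cosh (a*s)) (sinh (a*x) * (a*1)) x :=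
    ((hasDerivAt_id x).const_mul a).cosh
  have hsh : HasDerivAt (fun s : ℝ => sinh (a*s)) (cosh (a*x) * (a*1)) x :=
    ((hasDerivAt_id x).const_mul a).sinh
  have h1 := ((((Real.hasDerivAt_cos x).const_mul a).mul_const (sin (a*v))).mul hch).mul_const (cosh v)
  have h2 := ((((Real.hasDerivAt_sin x).const_mul a).mul_const (cos (a*v))).mul hsh).mul_const (sinh v)
  have h3 := (((Real.hasDerivAt_cos x).mul_const (cos (a*v))).mul hch).mul_const (sinh v)
  have h4 := (((Real.hasDerivAt_sin x).mul_const (sin (a*v))).mul hsh).mul_const (cosh v)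
  have h5 := (Real.hasDerivAt_cos x).mul_const (cosh v)
  have h := ((((h1.sub h2).add h3).add h4).div_const (a^2+1)).add h5
  unfold X1
  refine h.congr_deriv ?_
  have hne : (a:ℝ)^2 + 1 ≠ 0 := by positivity
  field_simp
  ring

lemma hX1uu : HasDerivAt (fun s =>
      -(cos (a*v) * sinh v) * (sin s * cosh (a*s)) + (sin (a*v) * cosh v) * (cos s * sinh (a*s))
        - cosh v * sin s)
    ((a*(sin (a*v)*cosh v) - cos (a*v)*sinh v) * (cos x * cosh (a*x))
      - (sin (a*v)*cosh v + a*(cos (a*v)*sinh v)) * (sin x * sinh (a*x)) - cosh v * cos x) x := by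
  have hch : HasDerivAt (fun s : ℝ => cosh (a*s)) (sinh (a*x) * (a*1)) x :=
    ((hasDerivAt_id x).const_mul a).cosh
  have hsh : HasDerivAt (fun s : ℝ => sinh (a*s)) (cosh (a*x) * (a*1)) x :=
    ((hasDerivAt_id x).const_mul a).sinh
  have h1 := ((Real.hasDerivAt_sin x).mul hch).const_mul (-(cos (a*v) * sinh v))
  have h2 := ((Real.hasDerivAt_cos x).mul hsh).const_mul (sin (a*v) * cosh v)
  have h3 := (Real.hasDerivAt_sin x).const_mul (cosh v)
  have h := (h1.add h2).sub h3
  refine h.congr_deriv ?_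
  ring

lemma hX1v : HasDerivAt (fun t => X1 a u t)
    (cos (a*x)*cosh x * (cos u * cosh (a*u)) + sin (a*x)*sinh x * (sin u * sinh (a*u))
      + cos u * sinh x) x := by
  have hsinat : HasDerivAt (fun t : ℝ => sin (a*t)) (cos (a*x) * (a*1)) x :=
    ((hasDerivAt_id x).const_mul a).sin
  have hcosat : HasDerivAt (fun t : ℝ => cos (a*t)) (-sin (a*x) * (a*1)) x :=
    ((hasDerivAt_id x).const_mul a).cos
  have h1 := ((hsinat.const_mul (a * cos u)).mul_const (cosh (a*u))).mul (Real.hasDerivAt_cosh x)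
  have h2 := ((hcosat.const_mul (a * sin u)).mul_const (sinh (a*u))).mul (Real.hasDerivAt_sinh x)
  have h3 := ((hcosat.const_mul (cos u)).mul_const (cosh (a*u))).mul (Real.hasDerivAt_sinh x)
  have h4 := ((hsinat.const_mul (sin u)).mul_const (sinh (a*u))).mul (Real.hasDerivAt_cosh x)
  have h5 := (Real.hasDerivAt_cosh x).const_mul (cos u)
  have h := ((((h1.sub h2).add h3).add h4).div_const (a^2+1)).add h5
  unfold X1
  refine h.congr_deriv ?_
  have hne : (a:ℝ)^2 + 1 ≠ 0 := by positivity
  field_simp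
  ring

lemma hX1vv : HasDerivAt (fun t =>
      cos (a*t)*cosh t * (cos u * cosh (a*u)) + sin (a*t)*sinh t * (sin u * sinh (a*u))
        + cos u * sinh t)
    ((cos (a*x)*sinh x - a*(sin (a*x)*cosh x)) * (cos u * cosh (a*u))
      + (a*(cos (a*x)*sinh x) + sin (a*x)*cosh x) * (sin u * sinh (a*u)) + cos u * cosh x) x := by
  have hsinat : HasDerivAt (fun t : ℝ => sin (a*t)) (cos (a*x) * (a*1)) x :=
    ((hasDerivAt_id x).const_mul a).sin
  have hcosat : HasDerivAt (fun t : ℝ => cos (a*t)) (-sin (a*x) * (a*1)) x :=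
    ((hasDerivAt_id x).const_mul a).cos
  have h1 := (hcosat.mul (Real.hasDerivAt_cosh x)).mul_const (cos u * cosh (a*u))
  have h2 := (hsinat.mul (Real.hasDerivAt_sinh x)).mul_const (sin u * sinh (a*u))
  have h3 := (Real.hasDerivAt_sinh x).const_mul (cos u)
  have h := (h1.add h2).add h3
  refine h.congr_deriv ?_
  ring

lemma hX2u : HasDerivAt (fun s => X2 a s v)
    ((cos (a*v)*sinh v) * (cos x * cosh (a*x)) + (sin (a*v)*cosh v) * (sin x * sinh (a*x))
      + cosh v * cos x) x := by
  have hch : HasDerivAt (fun s : ℝ => cosh (a*s)) (sinh (a*x) * (a*1)) x :=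
    ((hasDerivAt_id x).const_mul a).cosh
  have hsh : HasDerivAt (fun s : ℝ => sinh (a*s)) (cosh (a*x) * (a*1)) x :=
    ((hasDerivAt_id x).const_mul a).sinh
  have h1 := ((((Real.hasDerivAt_cos x).const_mul a).mul_const (cos (a*v))).mul hsh).mul_const (sinh v)
  have h2 := ((((Real.hasDerivAt_sin x).const_mul a).mul_const (sin (a*v))).mul hch).mul_const (cosh v)
  have h3 := (((Real.hasDerivAt_sin x).mul_const (cos (a*v))).mul hch).mul_const (sinh v)
  have h4 := (((Real.hasDerivAt_cos x).mul_const (sin (a*v))).mul hsh).mul_const (cosh v)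
  have h5 := (Real.hasDerivAt_sin x).mul_const (cosh v)
  have h := ((((h1.add h2).add h3).sub h4).div_const (a^2+1)).add h5
  unfold X2
  refine h.congr_deriv ?_
  have hne : (a:ℝ)^2 + 1 ≠ 0 := by positivity
  field_simp
  ring

lemma hX2uu : HasDerivAt (fun s =>
      (cos (a*v)*sinh v) * (cos s * cosh (a*s)) + (sin (a*v)*cosh v) * (sin s * sinh (a*s))
        + cosh v * cos s)
    ((a*(sin (a*v)*cosh v) - cos (a*v)*sinh v) * (sin x * cosh (a*x))
      + (a*(cos (a*v)*sinh v) + sin (a*v)*cosh v) * (cos x * sinh (a*x)) - cosh v * sin x) x := by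
  have hch : HasDerivAt (fun s : ℝ => cosh (a*s)) (sinh (a*x) * (a*1)) x :=
    ((hasDerivAt_id x).const_mul a).cosh
  have hsh : HasDerivAt (fun s : ℝ => sinh (a*s)) (cosh (a*x) * (a*1)) x :=
    ((hasDerivAt_id x).const_mul a).sinh
  have h1 := ((Real.hasDerivAt_cos x).mul hch).const_mul (cos (a*v)*sinh v)
  have h2 := ((Real.hasDerivAt_sin x).mul hsh).const_mul (sin (a*v)*cosh v)
  have h3 := (Real.hasDerivAt_cos x).const_mul (cosh v)
  have h := (h1.add h2).add h3
  refine h.congr_deriv ?_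
  ring

lemma hX2v : HasDerivAt (fun t => X2 a u t)
    ((cos (a*x)*cosh x) * (sin u * cosh (a*u)) - (sin (a*x)*sinh x) * (cos u * sinh (a*u))
      + sin u * sinh x) x := by
  have hsinat : HasDerivAt (fun t : ℝ => sin (a*t)) (cos (a*x) * (a*1)) x :=
    ((hasDerivAt_id x).const_mul a).sin
  have hcosat : HasDerivAt (fun t : ℝ => cos (a*t)) (-sin (a*x) * (a*1)) x :=
    ((hasDerivAt_id x).const_mul a).cos
  have h1 := ((hcosat.const_mul (a * cos u)).mul_const (sinh (a*u))).mul (Real.hasDerivAt_sinh x)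
  have h2 := ((hsinat.const_mul (a * sin u)).mul_const (cosh (a*u))).mul (Real.hasDerivAt_cosh x)
  have h3 := ((hcosat.const_mul (sin u)).mul_const (cosh (a*u))).mul (Real.hasDerivAt_sinh x)
  have h4 := ((hsinat.const_mul (cos u)).mul_const (sinh (a*u))).mul (Real.hasDerivAt_cosh x)
  have h5 := (Real.hasDerivAt_cosh x).const_mul (sin u)
  have h := ((((h1.add h2).add h3).sub h4).div_const (a^2+1)).add h5
  unfold X2
  refine h.congr_deriv ?_
  have hne : (a:ℝ)^2 + 1 ≠ 0 := by positivity
  field_simp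
  ring

lemma hX2vv : HasDerivAt (fun t =>
      (cos (a*t)*cosh t) * (sin u * cosh (a*u)) - (sin (a*t)*sinh t) * (cos u * sinh (a*u))
        + sin u * sinh t)
    ((cos (a*x)*sinh x - a*(sin (a*x)*cosh x)) * (sin u * cosh (a*u))
      - (a*(cos (a*x)*sinh x) + sin (a*x)*cosh x) * (cos u * sinh (a*u)) + sin u * cosh x) x := by
  have hsinat : HasDerivAt (fun t : ℝ => sin (a*t)) (cos (a*x) * (a*1)) x :=
    ((hasDerivAt_id x).const_mul a).sin
  have hcosat : HasDerivAt (fun t : ℝ => cos (a*t)) (-sin (a*x) * (a*1)) x :=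
    ((hasDerivAt_id x).const_mul a).cos
  have h1 := (hcosat.mul (Real.hasDerivAt_cosh x)).mul_const (sin u * cosh (a*u))
  have h2 := (hsinat.mul (Real.hasDerivAt_sinh x)).mul_const (cos u * sinh (a*u))
  have h3 := (Real.hasDerivAt_sinh x).const_mul (sin u)
  have h := (h1.sub h2).add h3
  refine h.congr_deriv ?_
  ring

lemma hX3u (ha : a ≠ 0) : HasDerivAt (fun s => X3 a s v)
    (-(sin (a*v) * cosh (a*x))) x := by
  have hsh : HasDerivAt (fun s : ℝ => sinh (a*s)) (cosh (a*x) * (a*1)) x :=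
    ((hasDerivAt_id x).const_mul a).sinh
  have h := ((hsh.const_mul (sin (a*v))).neg).div_const a
  unfold X3
  refine h.congr_deriv ?_
  field_simp

lemma hX3uu : HasDerivAt (fun s => -(sin (a*v) * cosh (a*s)))
    (-(a * (sin (a*v) * sinh (a*x)))) x := by
  have hch : HasDerivAt (fun s : ℝ => cosh (a*s)) (sinh (a*x) * (a*1)) x :=
    ((hasDerivAt_id x).const_mul a).cosh
  have h := (hch.const_mul (sin (a*v))).neg
  refine h.congr_deriv ?_
  ring

lemma hX3v (ha : a ≠ 0) : HasDerivAt (fun t => X3 a u t)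
    (-(cos (a*x) * sinh (a*u))) x := by
  have hsinat : HasDerivAt (fun t : ℝ => sin (a*t)) (cos (a*x) * (a*1)) x :=
    ((hasDerivAt_id x).const_mul a).sin
  have h := ((hsinat.mul_const (sinh (a*u))).neg).div_const a
  unfold X3
  refine h.congr_deriv ?_
  field_simp

lemma hX3vv : HasDerivAt (fun t => -(cos (a*t) * sinh (a*u)))
    (a * (sin (a*x) * sinh (a*u))) x := by
  have hcosat : HasDerivAt (fun t : ℝ => cos (a*t)) (-sin (a*x) * (a*1)) x :=
    ((hasDerivAt_id x).const_mul a).cos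
  have h := (hcosat.mul_const (sinh (a*u))).neg
  refine h.congr_deriv ?_
  ring

end Aux

/-- Each coordinate function of the bending helicoid with timelike axis is harmonic. -/
theorem bending_helicoid_timelike_harmonic (a : ℝ) (ha : 0 < a) (u v : ℝ) :
    deriv (deriv (fun s => X1 a s v)) u + deriv (deriv (fun t => X1 a u t)) v = 0 ∧
    deriv (deriv (fun s => X2 a s v)) u + deriv (deriv (fun t => X2 a u t)) v = 0 ∧
    deriv (deriv (fun s => X3 a s v)) u + deriv (deriv (fun t => X3 a u t)) v = 0 := by
  have ha' : a ≠ 0 := ha.ne'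
  have e1u : deriv (fun s => X1 a s v) = fun x =>
      -(cos (a*v) * sinh v) * (sin x * cosh (a*x)) + (sin (a*v) * cosh v) * (cos x * sinh (a*x))
        - cosh v * sin x := funext fun x => (hX1u a v x).deriv
  have e1v : deriv (fun t => X1 a u t) = fun x =>
      cos (a*x)*cosh x * (cos u * cosh (a*u)) + sin (a*x)*sinh x * (sin u * sinh (a*u))
        + cos u * sinh x := funext fun x => (hX1v a u x).deriv
  have e2u : deriv (fun s => X2 a s v) = fun x =>
      (cos (a*v)*sinh v) * (cos x * cosh (a*x)) + (sin (a*v)*cosh v) * (sin x * sinh (a*x))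
        + cosh v * cos x := funext fun x => (hX2u a v x).deriv
  have e2v : deriv (fun t => X2 a u t) = fun x =>
      (cos (a*x)*cosh x) * (sin u * cosh (a*u)) - (sin (a*x)*sinh x) * (cos u * sinh (a*u))
        + sin u * sinh x := funext fun x => (hX2v a u x).deriv
  have e3u : deriv (fun s => X3 a s v) = fun x =>
      -(sin (a*v) * cosh (a*x)) := funext fun x => (hX3u a v x ha').deriv
  have e3v : deriv (fun t => X3 a u t) = fun x =>
      -(cos (a*x) * sinh (a*u)) := funext fun x => (hX3v a u x ha').deriv
  refine ⟨?_, ?_, ?_⟩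
  · rw [e1u, e1v, (hX1uu a v u).deriv, (hX1vv a u v).deriv]; ring
  · rw [e2u, e2v, (hX2uu a v u).deriv, (hX2vv a u v).deriv]; ring
  · rw [e3u, e3v, (hX3uu a v u).deriv, (hX3vv a u v).deriv]; ring
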